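/- Let $M_1, M_2$ be nonempty compact subsets of $\mathbb{R}^D$ with $D \geq 1$. Let $z$ be a random vector taking values in $M_1$, and let $\varepsilon$ be an independent random vector in $\mathbb{R}^D$ whose coordinates are independent $N(0, \sigma^2)$ random variables with $\sigma > 0$. Set $x = z + \varepsilon$. Then for every $\delta > 0$ with $\delta^2/(4\sigma^2) > D$, $\mathbb{P}\big(d(x, M_1) > d(x, M_2)\big) \leq \mathbb{P}\big(d(z, M_2) < \delta\big) + \exp\{-\tfrac{\delta^2}{8\sigma^2} + \tfrac{D}{2}\log(\tfrac{\delta^2}{4\sigma^2}) - \tfrac{D}{2}(\log D - 1)\}$. -/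

import Mathlib

open MeasureTheory ProbabilityTheory Real

lemma gauss_exp_sq (v : NNReal) (hv : 0 < (v:ℝ)) {t : ℝ} (htv : 2 * t * (v:ℝ) < 1) :
    Integrable (fun y => Real.exp (t * y ^ 2)) (gaussianReal 0 v) ∧
    ∫ y, Real.exp (t * y ^ 2) ∂(gaussianReal 0 v) = (Real.sqrt (1 - 2 * t * (v:ℝ)))⁻¹ := by
  have hvne : v ≠ 0 := by
    intro h; rw [h] at hv; simp at hv
  set b : ℝ := (2*(v:ℝ))⁻¹ - t with hb
  have hbpos : 0 < b := by
    rw [hb, sub_pos, inv_eq_one_div, lt_div_iff₀ (by positivity)]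
    rw [show t*(2*(v:ℝ)) = 2*t*(v:ℝ) by ring]; exact htv
  have hpdf : ∀ x : ℝ, (gaussianPDFReal 0 v x) * Real.exp (t * x ^ 2)
      = (Real.sqrt (2*π*(v:ℝ)))⁻¹ * Real.exp (-b * x^2) := by
    intro x
    rw [gaussianPDFReal, mul_assoc, ← Real.exp_add]
    congr 1
    rw [hb]
    ring
  have hmeas : Measurable fun x : ℝ => (gaussianPDFReal 0 v x).toNNReal :=
    (measurable_gaussianPDFReal 0 v).real_toNNReal
  have hdens : gaussianReal 0 v
      = volume.withDensity fun x => ((gaussianPDFReal 0 v x).toNNReal : ENNReal) := by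
    rw [gaussianReal_of_var_ne_zero _ hvne]; rfl
  have hsmul : ∀ x : ℝ, (gaussianPDFReal 0 v x).toNNReal • Real.exp (t * x ^ 2)
      = (Real.sqrt (2*π*(v:ℝ)))⁻¹ * Real.exp (-b * x^2) := by
    intro x
    rw [NNReal.smul_def, smul_eq_mul, Real.coe_toNNReal _ (gaussianPDFReal_nonneg 0 v x), hpdf]
  constructor
  · rw [hdens, integrable_withDensity_iff_integrable_smul hmeas]
    simp_rw [hsmul]
    exact (integrable_exp_neg_mul_sq hbpos).const_mul _
  · rw [hdens, integral_withDensity_eq_integral_smul hmeas]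
    simp_rw [hsmul]
    rw [integral_const_mul, integral_gaussian]
    rw [← Real.sqrt_inv, ← Real.sqrt_mul (by positivity)]
    rw [show (2*π*(v:ℝ))⁻¹ * (π/b) = (2*(v:ℝ)*b)⁻¹ by field_simp]
    rw [show 2*(v:ℝ)*b = 1 - 2*t*(v:ℝ) by rw [hb]; field_simp]
    exact Real.sqrt_inv _

open Metric

/-- Oracle inequality from the proof of Theorem 2: if `z` takes values in the compact set
`M₁`, `ε` is an independent Gaussian noise vector with independent `N(0, σ²)` coordinates,
and `x = z + ε`, then for `δ` with `δ²/(4σ²) > D`,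
`P(d(x, M₁) > d(x, M₂)) ≤ P(d(z, M₂) < δ) + exp{-δ²/(8σ²) + (D/2) log(δ²/(4σ²)) - (D/2)(log D - 1)}`. -/
theorem spa_oracle_inequality
    {Ω : Type*} [MeasurableSpace Ω] (μ : Measure Ω) [IsProbabilityMeasure μ]
    (D : ℕ) (hD : 1 ≤ D)
    (M₁ M₂ : Set (EuclideanSpace ℝ (Fin D)))
    (hM₁ : M₁.Nonempty) (hM₂ : M₂.Nonempty)
    (hM₁c : IsCompact M₁) (hM₂c : IsCompact M₂)
    (σ : ℝ) (hσ : 0 < σ)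
    (z ε : Ω → EuclideanSpace ℝ (Fin D))
    (hzmeas : Measurable z) (hεmeas : Measurable ε)
    (hzM₁ : ∀ ω, z ω ∈ M₁)
    (hzε : IndepFun z ε μ)
    (hεcoord : iIndepFun (fun i ω => ε ω i) μ)
    (hgauss : ∀ i, μ.map (fun ω => ε ω i) = gaussianReal 0 ⟨σ ^ 2, sq_nonneg σ⟩)
    (δ : ℝ) (hδ : 0 < δ) (hSNR : (D : ℝ) < δ ^ 2 / (4 * σ ^ 2)) :
    μ {ω | infDist (z ω + ε ω) M₂ < infDist (z ω + ε ω) M₁} ≤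
      μ {ω | infDist (z ω) M₂ < δ} +
      ENNReal.ofReal (Real.exp
        (-(δ ^ 2) / (8 * σ ^ 2) + (D : ℝ) / 2 * Real.log (δ ^ 2 / (4 * σ ^ 2))
          - (D : ℝ) / 2 * (Real.log D - 1))) := by
  classical
  set v : NNReal := ⟨σ ^ 2, sq_nonneg σ⟩ with hvdef
  have hv : 0 < (v:ℝ) := by show (0:ℝ) < σ ^ 2; positivity
  have hvr : (v:ℝ) = σ ^ 2 := rfl
  set a : ℝ := δ ^ 2 / (4 * σ ^ 2) with hadef
  have hDpos : (0:ℝ) < D := by exact_mod_cast hD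
  have hapos : (0:ℝ) < a := lt_trans hDpos hSNR
  set t : ℝ := (1 - D / a) / (2 * (v:ℝ)) with htdef
  have ht : 0 ≤ t := by
    apply div_nonneg _ (by positivity)
    rw [sub_nonneg, div_le_one hapos]
    exact hSNR.le
  have hc : 1 - 2 * t * (v:ℝ) = D / a := by
    rw [htdef]; field_simp; ring
  have hcpos : (0:ℝ) < D / a := div_pos hDpos hapos
  have htv : 2 * t * (v:ℝ) < 1 := by
    rw [← sub_pos, hc]; exact hcpos
  -- coordinate squares
  set X : Fin D → Ω → ℝ := fun i ω => (ε ω i) ^ 2 with hXdef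
  have hXmeas : ∀ i, Measurable (X i) := fun i => (((measurable_pi_apply i).comp (PiLp.continuous_ofLp 2 _).measurable |>.comp hεmeas).pow_const 2)
  have hXindep : iIndepFun X μ :=
    hεcoord.comp (fun _ y => y ^ 2) (fun _ => measurable_id.pow_const 2)
  -- per coordinate mgf and integrability
  have hεimeas : ∀ i, Measurable fun ω => ε ω i := fun i => (measurable_pi_apply i).comp (PiLp.continuous_ofLp 2 _).measurable |>.comp hεmeas
  have hgm : Measurable fun y : ℝ => Real.exp (t * y ^ 2) := by measurability
  have hXint : ∀ i, Integrable (fun ω => Real.exp (t * X i ω)) μ := by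
    intro i
    have := (gauss_exp_sq v hv htv).1
    rw [← hgauss i] at this
    have h2 := (integrable_map_measure
      hgm.aestronglyMeasurable (hεimeas i).aemeasurable).mp this
    exact h2
  have hXmgf : ∀ i, mgf (X i) μ t = (Real.sqrt (1 - 2 * t * (v:ℝ)))⁻¹ := by
    intro i
    have := (gauss_exp_sq v hv htv).2
    rw [← hgauss i, integral_map (hεimeas i).aemeasurable hgm.aestronglyMeasurable] at this
    simpa [mgf, hXdef] using this
  -- sum
  set S : Ω → ℝ := ∑ i : Fin D, X i with hSdef
  have hSval : ∀ ω, S ω = ∑ i : Fin D, (ε ω i) ^ 2 := by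
    intro ω; rw [hSdef]; simp [hXdef]
  have hSint : Integrable (fun ω => Real.exp (t * S ω)) μ :=
    hXindep.integrable_exp_mul_sum hXmeas (fun i _ => hXint i)
  have hmgfS : mgf S μ t = ((Real.sqrt (1 - 2 * t * (v:ℝ)))⁻¹) ^ D := by
    rw [hSdef, hXindep.mgf_sum hXmeas]
    simp [hXmgf]
  -- Chernoff
  have hchern := measure_ge_le_exp_mul_mgf (μ := μ) (X := S) (δ ^ 2 / 4) ht hSint
  rw [hmgfS] at hchern
  -- identify the bound with the target exponential
  have hcval : Real.sqrt (1 - 2 * t * (v:ℝ)) = Real.exp (Real.log ((D:ℝ)/a) / 2) := by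
    rw [hc, Real.sqrt_eq_rpow, Real.rpow_def_of_pos hcpos]
    congr 1; ring
  have hbound : Real.exp (-t * (δ ^ 2 / 4)) * ((Real.sqrt (1 - 2 * t * (v:ℝ)))⁻¹) ^ D
      = Real.exp (-(δ ^ 2) / (8 * σ ^ 2) + (D : ℝ) / 2 * Real.log a
          - (D : ℝ) / 2 * (Real.log D - 1)) := by
    rw [hcval, ← Real.exp_neg, ← Real.exp_nat_mul, ← Real.exp_add]
    congr 1
    have hσ2 : (σ:ℝ) ^ 2 ≠ 0 := by positivity
    have ha' : a ≠ 0 := ne_of_gt hapos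
    have hδ2 : δ ^ 2 = 4 * σ ^ 2 * a := by rw [hadef]; field_simp
    have hta : t * (δ ^ 2 / 4) = (a - D) / 2 := by
      rw [htdef, hvr, hδ2]
      field_simp
    have hlog : Real.log ((D:ℝ)/a) = Real.log D - Real.log a :=
      Real.log_div (ne_of_gt hDpos) (ne_of_gt hapos)
    rw [neg_mul, hta, hlog, show -(δ ^ 2) / (8 * σ ^ 2) = -(a/2) by rw [hadef]; ring]
    ring
  -- event inclusion
  have hincl : {ω | infDist (z ω + ε ω) M₂ < infDist (z ω + ε ω) M₁} ⊆
      {ω | infDist (z ω) M₂ < δ} ∪ {ω | δ ^ 2 / 4 ≤ S ω} := by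
    intro ω hω
    simp only [Set.mem_setOf_eq] at hω
    by_cases h1 : infDist (z ω) M₂ < δ
    · exact Or.inl h1
    · right
      push_neg at h1
      show δ ^ 2 / 4 ≤ S ω
      have hnorm : dist (z ω + ε ω) (z ω) = ‖ε ω‖ := by
        rw [dist_eq_norm]; congr 1; abel
      have d1 : infDist (z ω + ε ω) M₁ ≤ ‖ε ω‖ := by
        rw [← hnorm]; exact infDist_le_dist_of_mem (hzM₁ ω)
      have d2 : infDist (z ω) M₂ ≤ infDist (z ω + ε ω) M₂ + ‖ε ω‖ := by
        rw [← hnorm, dist_comm]; exact infDist_le_infDist_add_dist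
      have hnε : δ / 2 ≤ ‖ε ω‖ := by linarith
      have hnormval : ‖ε ω‖ = Real.sqrt (S ω) := by
        rw [hSval, EuclideanSpace.norm_eq]
        congr 1
        refine Finset.sum_congr rfl fun i _ => ?_
        rw [Real.norm_eq_abs, sq_abs]
      have := (Real.le_sqrt' (by positivity)).mp (hnormval ▸ hnε)
      calc δ ^ 2 / 4 = (δ / 2) ^ 2 := by ring
        _ ≤ S ω := this
  calc μ {ω | infDist (z ω + ε ω) M₂ < infDist (z ω + ε ω) M₁}
      ≤ μ ({ω | infDist (z ω) M₂ < δ} ∪ {ω | δ ^ 2 / 4 ≤ S ω}) := measure_mono hincl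
    _ ≤ μ {ω | infDist (z ω) M₂ < δ} + μ {ω | δ ^ 2 / 4 ≤ S ω} := measure_union_le _ _
    _ ≤ _ := by
        gcongr
        rw [ENNReal.le_ofReal_iff_toReal_le (measure_ne_top μ _) (Real.exp_pos _).le]
        calc (μ {ω | δ ^ 2 / 4 ≤ S ω}).toReal
            ≤ Real.exp (-t * (δ ^ 2 / 4)) * ((Real.sqrt (1 - 2 * t * (v:ℝ)))⁻¹) ^ D := hchern
          _ = _ := by rw [hbound, hadef]
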